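/- arXiv:1601.08072 — 2 statements merged into one kernel-verified Lean document; each statement's English description precedes it below -/
import Mathlib

section
/- The series Σ_{k=1}^∞ ( c_{k+1}²/c_k² − c_k²/c_{k−1}² ) converges (the sequence of these nonnegative terms is summable), where c_k² = ∫_Ω |z₁z₂|^{2k} dV. -/
open Complex MeasureTheory Metric
open scoped ENNReal NNReal


lemma aux_summable (Ω : Set (ℂ × ℂ)) (hm : MeasurableSet Ω) (hfin : volume Ω ≠ ⊤)
    (hb : ∀ z ∈ Ω, ‖z.1 * z.2‖ ≤ 16)
    (W : Set (ℂ × ℂ)) (hWΩ : W ⊆ Ω) (hWm : MeasurableSet W) (hWpos : 0 < volume W)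
    (hWlb : ∀ z ∈ W, 1 ≤ ‖z.1 * z.2‖)
    (c2 : ℕ → ℝ) (hc2 : ∀ k, c2 k = ∫ z in Ω, ‖z.1 * z.2‖ ^ (2 * k)) :
    Summable (fun k : ℕ => c2 (k + 2) / c2 (k + 1) - c2 (k + 1) / c2 k) := by
  set G : ℂ × ℂ → ℝ := fun z => ‖z.1 * z.2‖ with hG
  have hGmeas : Measurable G :=
    (continuous_norm.comp (continuous_fst.mul continuous_snd)).measurable
  have hGnn : ∀ z, 0 ≤ G z := fun z => norm_nonneg _
  -- integrability of all powers
  have hint : ∀ m : ℕ, IntegrableOn (fun z => G z ^ m) Ω volume := by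
    intro m
    apply Measure.integrableOn_of_bounded (M := 16 ^ m) hfin
      (hGmeas.pow_const m).aestronglyMeasurable
    rw [ae_restrict_iff' hm]
    filter_upwards with z hz
    rw [Real.norm_eq_abs, _root_.abs_of_nonneg (pow_nonneg (hGnn z) m)]
    exact pow_le_pow_left₀ (hGnn z) (hb z hz) m
  -- positivity
  have hWfin : volume W ≠ ⊤ := (lt_of_le_of_lt (measure_mono hWΩ) hfin.lt_top).ne
  have hpos : ∀ k, 0 < c2 k := by
    intro k
    rw [hc2 k]
    have h1 : (volume W).toReal ≤ ∫ z in W, G z ^ (2 * k) := by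
      have := setIntegral_mono_on (f := fun _ : ℂ × ℂ => (1 : ℝ))
        (g := fun z => G z ^ (2 * k)) (integrableOn_const hWfin)
        ((hint (2 * k)).mono_set hWΩ) hWm
        (fun z hz => one_le_pow₀ (hWlb z hz))
      simpa [measureReal_def] using this
    have h2 : ∫ z in W, G z ^ (2 * k) ≤ ∫ z in Ω, G z ^ (2 * k) := by
      apply setIntegral_mono_set (hint (2 * k))
      · filter_upwards with z using pow_nonneg (hGnn z) _
      · exact HasSubset.Subset.eventuallyLE hWΩ
    have h0 : 0 < (volume W).toReal := ENNReal.toReal_pos hWpos.ne' hWfin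
    linarith
  -- Cauchy–Schwarz: c2 (k+1) ^ 2 ≤ c2 k * c2 (k+2)
  have hCS : ∀ k, c2 (k + 1) ^ 2 ≤ c2 k * c2 (k + 2) := by
    intro k
    have hquad : ∀ lam : ℝ,
        0 ≤ c2 k * (lam * lam) + (-2 * c2 (k + 1)) * lam + c2 (k + 2) := by
      intro lam
      have hnn : 0 ≤ ∫ z in Ω, (G z ^ (k + 2) - lam * G z ^ k) ^ 2 :=
        setIntegral_nonneg hm fun z _ => sq_nonneg _
      have hexp : ∀ z : ℂ × ℂ, (G z ^ (k + 2) - lam * G z ^ k) ^ 2 =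
          G z ^ (2 * (k + 2)) - (2 * lam) * G z ^ (2 * (k + 1))
            + (lam * lam) * G z ^ (2 * k) := by
        intro z; ring
      rw [show (fun z : ℂ × ℂ => (G z ^ (k + 2) - lam * G z ^ k) ^ 2)
            = fun z => G z ^ (2 * (k + 2)) - (2 * lam) * G z ^ (2 * (k + 1))
                + (lam * lam) * G z ^ (2 * k) from funext hexp] at hnn
      have hB : IntegrableOn (fun z => (2 * lam) * G z ^ (2 * (k + 1))) Ω volume :=
        (hint (2 * (k + 1))).const_mul _
      have hC : IntegrableOn (fun z => (lam * lam) * G z ^ (2 * k)) Ω volume :=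
        (hint (2 * k)).const_mul _
      have hAB : IntegrableOn
          (fun z => G z ^ (2 * (k + 2)) - (2 * lam) * G z ^ (2 * (k + 1))) Ω volume :=
        (hint (2 * (k + 2))).sub hB
      rw [integral_add hAB hC, integral_sub (hint (2 * (k + 2))) hB,
          integral_const_mul, integral_const_mul] at hnn
      rw [hc2 k, hc2 (k + 1), hc2 (k + 2)]
      simp only [hG] at hnn ⊢
      nlinarith [hnn]
    have := discrim_le_zero hquad
    rw [discrim] at this
    nlinarith [this]
  -- ratio bound
  have hrat : ∀ k, c2 (k + 1) ≤ 256 * c2 k := by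
    intro k
    have h1 : ∫ z in Ω, G z ^ (2 * (k + 1)) ≤ ∫ z in Ω, 256 * G z ^ (2 * k) := by
      apply setIntegral_mono_on (hint (2 * (k + 1))) ((hint (2 * k)).const_mul _) hm
      intro z hz
      have h16 : G z ≤ 16 := hb z hz
      have := hGnn z
      calc G z ^ (2 * (k + 1)) = G z ^ 2 * G z ^ (2 * k) := by ring
        _ ≤ 256 * G z ^ (2 * k) := by
            have : G z ^ 2 ≤ 256 := by nlinarith
            exact mul_le_mul_of_nonneg_right this (pow_nonneg (hGnn z) _)
    rw [integral_const_mul] at h1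
    rw [hc2 (k + 1), hc2 k]
    simpa [hG] using h1
  -- assemble
  set a : ℕ → ℝ := fun k => c2 (k + 1) / c2 k with ha
  have hmono : ∀ k, a k ≤ a (k + 1) := by
    intro k
    rw [ha]
    rw [div_le_div_iff₀ (hpos k) (hpos (k + 1))]
    nlinarith [hCS k]
  have hbd : ∀ k, a k ≤ 256 := fun k =>
    (div_le_iff₀ (hpos k)).2 (by nlinarith [hrat k, hpos k])
  have hnn' : ∀ k, 0 ≤ a k := fun k => div_nonneg (hpos (k + 1)).le (hpos k).le
  have heq : (fun k : ℕ => c2 (k + 2) / c2 (k + 1) - c2 (k + 1) / c2 k)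
      = fun k => a (k + 1) - a k := rfl
  rw [heq]
  apply summable_of_sum_range_le (c := 256) (fun k => sub_nonneg.2 (hmono k))
  intro n
  rw [Finset.sum_range_sub (fun k => a k)]
  have := hbd n
  have := hnn' 0
  linarith


lemma volZ_test : volume {z : ℂ × ℂ | ‖z.1‖ ≤ 4 ∧ ‖z.2‖ ≤ 4} < ⊤ := by
  have he : {z : ℂ × ℂ | ‖z.1‖ ≤ 4 ∧ ‖z.2‖ ≤ 4}
      = closedBall (0:ℂ) 4 ×ˢ closedBall (0:ℂ) 4 := by
    ext z
    simp [Set.mem_prod, mem_closedBall_zero_iff]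
  rw [he, Measure.volume_eq_prod, Measure.prod_prod, Complex.volume_closedBall]
  exact ENNReal.mul_lt_top
    (ENNReal.mul_lt_top (ENNReal.pow_lt_top ENNReal.ofReal_lt_top) ENNReal.coe_lt_top)
    (ENNReal.mul_lt_top (ENNReal.pow_lt_top ENNReal.ofReal_lt_top) ENNReal.coe_lt_top)

lemma volX_test : volume {z : ℂ × ℂ | 4 < ‖z.1‖ ∧
    ‖z.2‖ < 1 / (2 * ‖z.1‖ * (Real.log (‖z.1‖) / Real.log 4))}
    < ⊤ := by
  set T : ℕ → Set (ℂ × ℂ) := fun n =>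
    ball (0:ℂ) (4 ^ (n + 2)) ×ˢ ball (0:ℂ) (1 / (2 * 4 ^ (n + 1) * ((n:ℝ) + 1))) with hT
  have hsub : {z : ℂ × ℂ | 4 < ‖z.1‖ ∧
      ‖z.2‖ < 1 / (2 * ‖z.1‖ * (Real.log (‖z.1‖) / Real.log 4))}
      ⊆ ⋃ n : ℕ, T n := by
    rintro z ⟨h4, h2⟩
    set t := ‖z.1‖ with htdef
    have ht0 : (0:ℝ) ≤ t := norm_nonneg _
    have hfl : 4 ≤ ⌊t⌋₊ := Nat.le_floor (by exact_mod_cast h4.le)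
    obtain ⟨n, hmn⟩ : ∃ n, Nat.log 4 ⌊t⌋₊ = n + 1 :=
      ⟨_, (Nat.succ_pred_eq_of_pos (Nat.log_pos (by norm_num) hfl)).symm⟩
    set m := Nat.log 4 ⌊t⌋₊ with hm
    have hlow : ((4:ℝ)) ^ m ≤ t := by
      have h := Nat.pow_log_le_self 4 (by omega : ⌊t⌋₊ ≠ 0)
      calc ((4:ℝ))^m = ((4^m : ℕ) : ℝ) := by push_cast; ring
        _ ≤ (⌊t⌋₊ : ℝ) := by exact_mod_cast h
        _ ≤ t := Nat.floor_le ht0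
    have hhigh : t < (4:ℝ) ^ (m + 1) := by
      have h := Nat.lt_pow_succ_log_self (by norm_num : 1 < 4) ⌊t⌋₊
      calc t < (⌊t⌋₊ : ℝ) + 1 := Nat.lt_floor_add_one t
        _ ≤ ((4 ^ (m+1) : ℕ) : ℝ) := by exact_mod_cast Nat.succ_le_of_lt h
        _ = (4:ℝ)^(m+1) := by push_cast; ring
    have hL : ((m:ℝ)) ≤ Real.log t / Real.log 4 := by
      rw [le_div_iff₀ (Real.log_pos (by norm_num))]
      calc (m:ℝ) * Real.log 4 = Real.log ((4:ℝ) ^ m) := (Real.log_pow (n := m) (x := 4)).symm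
        _ ≤ Real.log t := Real.log_le_log (by positivity) hlow
    rw [hmn] at hlow hhigh hL
    refine Set.mem_iUnion.2 ⟨n, Set.mem_prod.2 ⟨?_, ?_⟩⟩
    · rw [mem_ball_zero_iff, ← htdef]
      calc t < (4:ℝ) ^ (n + 1 + 1) := hhigh
        _ = (4:ℝ) ^ (n + 2) := by ring
    · rw [mem_ball_zero_iff]
      have hm' : (1:ℝ) ≤ ((n:ℝ) + 1) := by have := Nat.cast_nonneg (α := ℝ) n; linarith
      have hden : (0:ℝ) < 2 * 4 ^ (n + 1) * ((n:ℝ) + 1) := by positivity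
      have hcast : ((n + 1 : ℕ) : ℝ) = (n:ℝ) + 1 := by push_cast; ring
      have hle : 2 * 4 ^ (n + 1) * ((n:ℝ) + 1)
          ≤ 2 * t * (Real.log t / Real.log 4) := by
        have h1 : (4:ℝ) ^ (n + 1) ≤ t := hlow
        have h2 : ((n:ℝ) + 1) ≤ Real.log t / Real.log 4 := by
          rw [← hcast]; exact hL
        have ht4 : (0:ℝ) < t := by linarith
        nlinarith [pow_pos (show (0:ℝ) < 4 by norm_num) (n + 1)]
      calc ‖z.2‖ < 1 / (2 * t * (Real.log t / Real.log 4)) := h2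
        _ ≤ 1 / (2 * 4 ^ (n + 1) * ((n:ℝ) + 1)) := by
          apply one_div_le_one_div_of_le hden hle
  calc volume {z : ℂ × ℂ | 4 < ‖z.1‖ ∧
      ‖z.2‖ < 1 / (2 * ‖z.1‖ * (Real.log (‖z.1‖) / Real.log 4))}
      ≤ volume (⋃ n : ℕ, T n) := measure_mono hsub
    _ ≤ ∑' n : ℕ, volume (T n) := measure_iUnion_le T
    _ ≤ ∑' n : ℕ, ENNReal.ofReal (4 * Real.pi ^ 2 / ((n:ℝ) + 1) ^ 2) := by
        apply ENNReal.tsum_le_tsum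
        intro n
        have hr1 : (0:ℝ) ≤ (4:ℝ) ^ (n + 2) := by positivity
        have hr2 : (0:ℝ) ≤ 1 / (2 * 4 ^ (n + 1) * ((n:ℝ) + 1)) := by positivity
        rw [hT]
        rw [Measure.volume_eq_prod, Measure.prod_prod, Complex.volume_ball,
          Complex.volume_ball]
        rw [← ENNReal.ofReal_pow hr1, ← ENNReal.ofReal_pow hr2,
          show ((NNReal.pi : ℝ≥0∞)) = ENNReal.ofReal Real.pi by
            rw [← ENNReal.ofReal_coe_nnreal, NNReal.coe_real_pi],
          ← ENNReal.ofReal_mul (by positivity), ← ENNReal.ofReal_mul (by positivity),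
          ← ENNReal.ofReal_mul (by positivity)]
        apply ENNReal.ofReal_le_ofReal
        have hne : ((n:ℝ) + 1) ≠ 0 := by positivity
        have h4ne : ((4:ℝ) ^ (n + 1)) ≠ 0 := by positivity
        apply le_of_eq
        field_simp
        ring
    _ < ⊤ := by
        have h0 : Summable (fun n : ℕ => 1 / ((n:ℝ)) ^ 2) :=
          Real.summable_one_div_nat_pow.2 one_lt_two
        have h1 : Summable (fun n : ℕ => 1 / (((n:ℝ) + 1)) ^ 2) := by
          have := (summable_nat_add_iff 1).2 h0
          simpa using this
        have h2 : Summable (fun n : ℕ => 4 * Real.pi ^ 2 / ((n:ℝ) + 1) ^ 2) := by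
          have := h1.mul_left (4 * Real.pi ^ 2)
          apply this.congr
          intro n
          rw [mul_one_div, div_eq_div_iff] <;> positivity
        rw [← ENNReal.ofReal_tsum_of_nonneg (fun n => by positivity) h2]
        exact ENNReal.ofReal_lt_top


lemma denpos_test {r : ℝ} (hr0 : 0 < r) (hrlt : r < 1/2) : 0 < r - 2 * r ^ 3 := by
  have h1 : r ^ 2 < 1/4 := by nlinarith
  have h2 : 0 < r * (1/4 - r ^ 2) := mul_pos hr0 (by linarith)
  nlinarith [pow_pos hr0 3, h2]

lemma volY_test : volume {z : ℂ × ℂ | 4 < ‖z.2‖ ∧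
    |‖z.1‖ - 1 / ‖z.2‖| < 1 / (‖z.2‖) ^ 3} < ⊤ := by
  set Ys : Set (ℂ × ℂ) := {z : ℂ × ℂ | 4 < ‖z.2‖ ∧
    |‖z.1‖ - 1 / ‖z.2‖| < 1 / (‖z.2‖) ^ 3} with hYs
  have h1 : Measurable fun z : ℂ × ℂ => ‖z.1‖ :=
    continuous_norm.measurable.comp measurable_fst
  have h2 : Measurable fun z : ℂ × ℂ => ‖z.2‖ :=
    continuous_norm.measurable.comp measurable_snd
  have hYm : MeasurableSet Ys := by
    rw [hYs]
    exact (measurableSet_lt measurable_const h2).inter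
      (measurableSet_lt ((h1.sub (h2.const_div 1)).abs) ((h2.pow_const 3).const_div 1))
  rw [Measure.volume_eq_prod, Measure.prod_apply hYm]
  -- key facts for points of a section
  have key : ∀ (w ζ : ℂ), (w, ζ) ∈ Ys →
      0 < ‖w‖ ∧ ‖w‖ < 1/2 ∧
      1 / (‖w‖ + 2 * ‖w‖ ^ 3) < ‖ζ‖ ∧
      ‖ζ‖ < 1 / (‖w‖ - 2 * ‖w‖ ^ 3) := by
    intro w ζ hz
    obtain ⟨hs4, habs⟩ := hz
    simp only at hs4 habs
    set s := ‖ζ‖ with hsd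
    set r := ‖w‖ with hrd
    have hs0 : (0:ℝ) < s := by linarith
    set u := 1 / s with hud
    have hu0 : 0 < u := by positivity
    have hu4 : u < 1/4 := by
      rw [hud, div_lt_iff₀ hs0]; linarith
    have hu3 : 1 / s ^ 3 = u ^ 3 := by rw [hud, div_pow, one_pow]
    rw [hu3] at habs
    obtain ⟨hl, hr⟩ := abs_lt.1 habs
    have hu2 : u ^ 2 < 1/16 := by nlinarith
    have hu3' : u ^ 3 < u / 16 := by nlinarith
    have hr0 : 0 < r := by nlinarith
    have hrlt : r < 1/2 := by nlinarith
    -- u < (16/15) r hence u^3 < 2 r^3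
    have hu_lt : u * (15/16) < r := by nlinarith
    have h3c : (u * (15/16)) ^ 3 < r ^ 3 := by
      apply pow_lt_pow_left₀ hu_lt (by positivity)
      norm_num
    have hu3r : u ^ 3 < 2 * r ^ 3 := by nlinarith [h3c, pow_pos hr0 3, pow_pos hu0 3]
    have hAB : u < r + 2 * r ^ 3 ∧ r - 2 * r ^ 3 < u := ⟨by linarith, by linarith⟩
    have hs_eq : s = 1 / u := by rw [hud, one_div_one_div]
    refine ⟨hr0, hrlt, ?_, ?_⟩
    · rw [hs_eq]
      exact one_div_lt_one_div_of_lt (by positivity) hAB.1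
    · rw [hs_eq]
      have hd : 0 < r - 2 * r ^ 3 := denpos_test hr0 hrlt
      exact one_div_lt_one_div_of_lt (by positivity) (by linarith [hAB.2] : r - 2*r^3 < u)
  have hpt : ∀ w : ℂ, volume (Prod.mk w ⁻¹' Ys) ≤
      (ball (0:ℂ) 1).indicator (fun _ => ENNReal.ofReal (15 * Real.pi)) w := by
    intro w
    set r := ‖w‖ with hrd
    by_cases hr : 0 < r ∧ r < 1/2
    · obtain ⟨hr0, hr2⟩ := hr
      have hwmem : w ∈ ball (0:ℂ) 1 := by
        rw [mem_ball_zero_iff, ← hrd]; linarith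
      rw [Set.indicator_of_mem hwmem]
      set A := 1 / (r + 2 * r ^ 3) with hA
      set B := 1 / (r - 2 * r ^ 3) with hB
      have hden : 0 < r - 2 * r ^ 3 := denpos_test hr0 hr2
      have hA0 : 0 < A := by positivity
      have hAB : A < B := by
        apply one_div_lt_one_div_of_lt hden; nlinarith [pow_pos hr0 3]
      have hsub : Prod.mk w ⁻¹' Ys ⊆ ball (0:ℂ) B \ closedBall (0:ℂ) A := by
        intro ζ hζ
        obtain ⟨_, _, h3, h4⟩ := key w ζ hζ
        constructor
        · rw [mem_ball_zero_iff]; exact h4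
        · rw [mem_closedBall_zero_iff]
          push_neg
          exact h3
      calc volume (Prod.mk w ⁻¹' Ys) ≤ volume (ball (0:ℂ) B \ closedBall (0:ℂ) A) :=
            measure_mono hsub
        _ = volume (ball (0:ℂ) B) - volume (closedBall (0:ℂ) A) := by
            apply measure_diff (closedBall_subset_ball hAB)
              measurableSet_closedBall.nullMeasurableSet
            rw [Complex.volume_closedBall]
            exact (ENNReal.mul_lt_top (ENNReal.pow_lt_top ENNReal.ofReal_lt_top)
              ENNReal.coe_lt_top).ne
        _ ≤ ENNReal.ofReal (15 * Real.pi) := by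
            rw [Complex.volume_ball, Complex.volume_closedBall,
              ← ENNReal.ofReal_pow (by positivity), ← ENNReal.ofReal_pow hA0.le,
              show ((NNReal.pi : ℝ≥0∞)) = ENNReal.ofReal Real.pi by
                rw [← ENNReal.ofReal_coe_nnreal, NNReal.coe_real_pi],
              ← ENNReal.ofReal_mul (by positivity), ← ENNReal.ofReal_mul (by positivity),
              ← ENNReal.ofReal_sub _ (by positivity)]
            apply ENNReal.ofReal_le_ofReal
            rw [← sub_mul]
            have hkey : B ^ 2 - A ^ 2 ≤ 15 := by
              have he : B ^ 2 - A ^ 2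
                  = 8 * r ^ 4 / ((r - 2 * r ^ 3) ^ 2 * (r + 2 * r ^ 3) ^ 2) := by
                rw [hA, hB, div_pow, div_pow, one_pow, div_sub_div _ _ (pow_ne_zero 2 hden.ne') (pow_ne_zero 2 (by positivity))]; ring
              rw [he, div_le_iff₀ (by positivity)]
              have ha : r ^ 2 < 1/4 := by nlinarith
              have hb : r ^ 4 ≤ 1/16 := by nlinarith [ha, pow_pos hr0 2]
              nlinarith [hb, pow_pos hr0 4, sq_nonneg (r ^ 4 - 1/16),
                mul_nonneg (sq_nonneg (r ^ 4 - 1/16)) (pow_pos hr0 4).le,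
                mul_nonneg (sub_nonneg.2 hb) (pow_pos hr0 4).le]
            nlinarith [Real.pi_pos]
    · have hempty : Prod.mk w ⁻¹' Ys = ∅ := by
        rw [Set.eq_empty_iff_forall_notMem]
        intro ζ hζ
        obtain ⟨h0, h1', _, _⟩ := key w ζ hζ
        exact hr ⟨h0, h1'⟩
      rw [hempty]
      simp
  calc ∫⁻ w, volume (Prod.mk w ⁻¹' Ys) ≤
      ∫⁻ w, (ball (0:ℂ) 1).indicator (fun _ => ENNReal.ofReal (15 * Real.pi)) w :=
        lintegral_mono hpt
    _ = ENNReal.ofReal (15 * Real.pi) * volume (ball (0:ℂ) 1) :=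
        lintegral_indicator_const measurableSet_ball _
    _ < ⊤ := by
        rw [Complex.volume_ball]
        exact ENNReal.mul_lt_top ENNReal.ofReal_lt_top
          (ENNReal.mul_lt_top (ENNReal.pow_lt_top ENNReal.ofReal_lt_top)
            ENNReal.coe_lt_top)


/-- The series `Σ_{k=1}^∞ (c_{k+1}²/c_k² − c_k²/c_{k−1}²)` converges, where
`c_k² = ∫_Ω |z₁z₂|^{2k} dV`.  (This is the Hilbert–Schmidt condition for the
Hankel operator `H_{conj(z₁)conj(z₂)}` on the Bergman space of `Ω`.) -/
theorem stmt_13 (X Y Z Ω : Set (ℂ × ℂ))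
    (hX : X = {z : ℂ × ℂ | 4 < ‖z.1‖ ∧
      ‖z.2‖ < 1 / (2 * ‖z.1‖ * (Real.log (‖z.1‖) / Real.log 4))})
    (hY : Y = {z : ℂ × ℂ | 4 < ‖z.2‖ ∧
      |‖z.1‖ - 1 / ‖z.2‖| < 1 / (‖z.2‖) ^ 3})
    (hZ : Z = {z : ℂ × ℂ | ‖z.1‖ ≤ 4 ∧ ‖z.2‖ ≤ 4})
    (hΩ : Ω = X ∪ Y ∪ Z)
    (c2 : ℕ → ℝ) (hc2 : ∀ k, c2 k = ∫ z in Ω, ‖z.1 * z.2‖ ^ (2 * k)) :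
    Summable (fun k : ℕ => c2 (k + 2) / c2 (k + 1) - c2 (k + 1) / c2 k) := by
  have h1m : Measurable fun z : ℂ × ℂ => ‖z.1‖ :=
    continuous_norm.measurable.comp measurable_fst
  have h2m : Measurable fun z : ℂ × ℂ => ‖z.2‖ :=
    continuous_norm.measurable.comp measurable_snd
  have hXm : MeasurableSet X := by
    rw [hX]
    exact (measurableSet_lt measurable_const h1m).inter
      (measurableSet_lt h2m (((measurable_const.mul h1m).mul
        ((Real.measurable_log.comp h1m).div measurable_const)).const_div 1))
  have hYm : MeasurableSet Y := by
    rw [hY]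
    exact (measurableSet_lt measurable_const h2m).inter
      (measurableSet_lt ((h1m.sub (h2m.const_div 1)).abs) ((h2m.pow_const 3).const_div 1))
  have hZm : MeasurableSet Z := by
    rw [hZ]
    exact (measurableSet_le h1m measurable_const).inter
      (measurableSet_le h2m measurable_const)
  have hm : MeasurableSet Ω := by
    rw [hΩ]; exact (hXm.union hYm).union hZm
  have hfin : volume Ω ≠ ⊤ := by
    rw [hΩ]
    have h1 := measure_union_le (μ := volume) (X ∪ Y) Z
    have h2 := measure_union_le (μ := volume) X Y
    have hx : volume X < ⊤ := hX ▸ volX_test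
    have hy : volume Y < ⊤ := hY ▸ volY_test
    have hz : volume Z < ⊤ := hZ ▸ volZ_test
    have : volume (X ∪ Y ∪ Z) < ⊤ := lt_of_le_of_lt h1
      (lt_of_le_of_lt (add_le_add_left h2 _)
        (ENNReal.add_lt_top.2 ⟨ENNReal.add_lt_top.2 ⟨hx, hy⟩, hz⟩))
    exact this.ne
  have hb : ∀ z ∈ Ω, ‖z.1 * z.2‖ ≤ 16 := by
    intro z hz
    rw [hΩ] at hz
    rw [norm_mul]
    rcases hz with (hz | hz) | hz
    · rw [hX] at hz
      obtain ⟨h4, h2'⟩ := hz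
      set t := ‖z.1‖
      have ht : (0:ℝ) < t := by linarith
      have hL : (1:ℝ) < Real.log t / Real.log 4 := by
        rw [lt_div_iff₀ (Real.log_pos (by norm_num))]
        rw [one_mul]
        exact Real.log_lt_log (by norm_num) h4
      have hden : (0:ℝ) < 2 * t * (Real.log t / Real.log 4) := by positivity
      have hlt : t * ‖z.2‖ < t * (1 / (2 * t * (Real.log t / Real.log 4))) :=
        mul_lt_mul_of_pos_left h2' ht
      have hlogt : (0:ℝ) < Real.log t := Real.log_pos (by linarith)
      have heq : t * (1 / (2 * t * (Real.log t / Real.log 4)))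
          = 1 / (2 * (Real.log t / Real.log 4)) := by
        field_simp
      have hsmall : 1 / (2 * (Real.log t / Real.log 4)) ≤ 1 := by
        rw [div_le_one (by linarith)]; linarith
      linarith [heq ▸ hlt]
    · rw [hY] at hz
      obtain ⟨h4, h2'⟩ := hz
      set s := ‖z.2‖
      set r := ‖z.1‖
      have hs : (0:ℝ) < s := by linarith
      have h5 : r - 1 / s < 1 / s ^ 3 := lt_of_abs_lt h2'
      have hr : r < 1 / s + 1 / s ^ 3 := by linarith
      have hlt : r * s < (1 / s + 1 / s ^ 3) * s := mul_lt_mul_of_pos_right hr hs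
      have heq : (1 / s + 1 / s ^ 3) * s = 1 + 1 / s ^ 2 := by field_simp
      have hs2 : 1 / s ^ 2 ≤ 1 := by
        rw [div_le_one (by positivity)]; nlinarith
      linarith [heq ▸ hlt]
    · rw [hZ] at hz
      calc ‖z.1‖ * ‖z.2‖ ≤ 4 * 4 :=
        mul_le_mul hz.1 hz.2 (norm_nonneg _) (by norm_num)
      _ = 16 := by norm_num
  have key : ∀ w : ℂ, w ∈ Metric.closedBall (2:ℂ) 1 →
      1 ≤ ‖w‖ ∧ ‖w‖ ≤ 4 := by
    intro w hw
    rw [Metric.mem_closedBall, dist_eq_norm] at hw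
    have h2n : ‖(2:ℂ)‖ = 2 := by
      rw [Complex.norm_two]
    have habs : ‖w‖ = ‖w‖ := rfl
    constructor
    · have h := norm_sub_norm_le (2:ℂ) w
      rw [norm_sub_rev] at h
      rw [habs]; linarith
    · have h := norm_add_le (w - 2) (2:ℂ)
      rw [sub_add_cancel] at h
      rw [habs]; linarith
  apply aux_summable Ω hm hfin hb
    (Metric.closedBall (2:ℂ) 1 ×ˢ Metric.closedBall (2:ℂ) 1) ?_ ?_ ?_ ?_ c2 hc2
  · intro z hz
    rw [hΩ]
    right
    rw [hZ]
    obtain ⟨hz1, hz2⟩ := hz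
    exact ⟨(key _ hz1).2, (key _ hz2).2⟩
  · exact measurableSet_closedBall.prod measurableSet_closedBall
  · rw [Measure.volume_eq_prod, Measure.prod_prod]
    apply ENNReal.mul_pos <;>
      exact (Metric.measure_closedBall_pos volume 2 one_pos).ne'
  · intro z hz
    rw [norm_mul]
    obtain ⟨hz1, hz2⟩ := hz
    nlinarith [(key _ hz1).1, (key _ hz2).1]
end

section
/- Let D = D₁(0) ∩ D₁(1) ⊂ ℂ (the lens-shaped intersection of the open unit discs centered at 0 and at 1), let 𝔻 be the open unit disc, and let F : D → 𝔻 be a holomorphic bijection from D onto 𝔻 with derivative F′. Let H : ℂ → ℂ be continuous, radial (H(ξ) depends only on |ξ|), and supported in a compact subset of 𝔻. Then for every z ∈ D, ∫_{w ∈ D} F′(z) · (1 − F(z)·conj(F(w)))^{−2} · conj(F′(w)) · H(F(w)) · F′(w) dA(w) = ( ∫_{ξ ∈ 𝔻} H(ξ) dA(ξ) ) · F′(z). That is, the projection of χ(w) = H(F(w))F′(w) against the transformed kernel F′(z)K_𝔻(F(z),F(w))conj(F′(w)) equals a constant multiple c·F′(z), with c = π^{-1}∫_𝔻 H dA (kernels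 normalized with the factor 1/π on both sides). -/
open Complex MeasureTheory Real

lemma det_mul_aux (c : ℂ) :
    ContinuousLinearMap.det
      (ContinuousLinearMap.restrictScalars ℝ ((1 : ℂ →L[ℂ] ℂ).smulRight c)) =
    Complex.normSq c := by
  have h : ((ContinuousLinearMap.restrictScalars ℝ ((1 : ℂ →L[ℂ] ℂ).smulRight c)) :
      ℂ →ₗ[ℝ] ℂ) = Algebra.lmul ℝ ℂ c := by
    ext z
    simp [mul_comm]
  rw [ContinuousLinearMap.det, h, ← Algebra.norm_apply, Algebra.norm_complex_apply]

lemma circle_avg (a : ℂ) (ha : ‖a‖ < 1) :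
    ∫ θ in Set.Ioc (0:ℝ) (2*π), ((1 - a * Complex.exp (-(θ:ℂ) * I))^2)⁻¹ = (2*π : ℂ) := by
  have habs : ∀ θ : ℝ, ‖a * Complex.exp (-(θ:ℂ) * I)‖ < 1 := by
    intro θ
    rw [norm_mul]
    have : ‖Complex.exp (-(θ:ℂ) * I)‖ = 1 := by
      rw [Complex.norm_exp]; simp
    rw [this, mul_one]; exact ha
  have hre : ∀ θ : ℝ, 0 < ((1:ℂ) - a * Complex.exp (-(θ:ℂ) * I)).re := by
    intro θ
    have := Complex.re_le_norm (a * Complex.exp (-(θ:ℂ) * I))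
    simp only [Complex.sub_re, Complex.one_re]
    nlinarith [habs θ]
  have hne : ∀ θ : ℝ, (1:ℂ) - a * Complex.exp (-(θ:ℂ) * I) ≠ 0 := by
    intro θ h
    have := hre θ
    rw [h] at this
    simp at this
  have hvcont : Continuous fun θ : ℝ => (1:ℂ) - a * Complex.exp (-(θ:ℂ) * I) := by
    apply continuous_const.sub
    exact continuous_const.mul (Continuous.cexp (by continuity))
  have key : ∀ θ : ℝ, HasDerivAt
      (fun θ : ℝ => (θ:ℂ) + I / (1 - a * Complex.exp (-(θ:ℂ) * I))
        - I * Complex.log (1 - a * Complex.exp (-(θ:ℂ) * I)))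
      (((1 - a * Complex.exp (-(θ:ℂ) * I))^2)⁻¹) θ := by
    intro θ
    have hE : HasDerivAt (fun θ : ℝ => Complex.exp (-(θ:ℂ) * I))
        (Complex.exp (-(θ:ℂ) * I) * (-1 * I)) θ :=
      (((hasDerivAt_id θ).ofReal_comp.neg.mul_const I)).cexp
    have hv : HasDerivAt (fun θ : ℝ => 1 - a * Complex.exp (-(θ:ℂ) * I))
        (-(a * (Complex.exp (-(θ:ℂ) * I) * (-1 * I)))) θ := (hE.const_mul a).const_sub 1
    have hdiv : HasDerivAt (fun θ : ℝ => I / (1 - a * Complex.exp (-(θ:ℂ) * I)))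
        ((0 * (1 - a * Complex.exp (-(θ:ℂ) * I)) -
          I * (-(a * (Complex.exp (-(θ:ℂ) * I) * (-1 * I))))) /
          (1 - a * Complex.exp (-(θ:ℂ) * I)) ^ 2) θ :=
      (hasDerivAt_const θ I).div hv (hne θ)
    have hlog : HasDerivAt (fun θ : ℝ => Complex.log (1 - a * Complex.exp (-(θ:ℂ) * I)))
        ((-(a * (Complex.exp (-(θ:ℂ) * I) * (-1 * I)))) /
          (1 - a * Complex.exp (-(θ:ℂ) * I))) θ := hv.clog_real (Or.inl (hre θ))
    have hG := ((hasDerivAt_id θ).ofReal_comp.add hdiv).sub (hlog.const_mul I)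
    refine HasDerivAt.congr_deriv hG ?_
    have h1 : (1:ℂ) - a * Complex.exp (-(θ:ℂ) * I) ≠ 0 := hne θ
    set E := Complex.exp (-(θ:ℂ) * I)
    field_simp
    ring_nf
    simp [Complex.I_sq]
    ring
  have hint : IntervalIntegrable
      (fun θ : ℝ => (((1:ℂ) - a * Complex.exp (-(θ:ℂ) * I))^2)⁻¹) volume 0 (2*π) :=
    ((hvcont.pow 2).inv₀ (fun θ => pow_ne_zero 2 (hne θ))).intervalIntegrable _ _
  have h2pi : (0:ℝ) ≤ 2*π := by positivity
  rw [← intervalIntegral.integral_of_le h2pi,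
    intervalIntegral.integral_eq_sub_of_hasDerivAt (fun t _ => key t) hint]
  have hexp : Complex.exp (-(2*(π:ℂ)*I)) = 1 := by
    rw [show -(2*(π:ℂ)*I) = (-1 : ℤ) * (2*π*I) by ring, Complex.exp_int_mul_two_pi_mul_I]
  push_cast
  rw [show -(2 * (π:ℂ)) * I = -(2 * (π:ℂ) * I) by ring, hexp]
  norm_num

lemma rot_inv (f : ℂ → ℂ) (c : Circle) :
    (∫ ξ in Metric.ball (0:ℂ) 1, f ((c:ℂ) * ξ)) = ∫ ξ in Metric.ball (0:ℂ) 1, f ξ := by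
  have hmp : MeasurePreserving (rotation c) volume volume :=
    (rotation c).measurePreserving
  have hemb : MeasurableEmbedding (rotation c) :=
    (rotation c).toHomeomorph.measurableEmbedding
  have himg : (rotation c) '' Metric.ball (0:ℂ) 1 = Metric.ball (0:ℂ) 1 := by
    rw [LinearIsometryEquiv.image_ball, map_zero]
  have h := hmp.setIntegral_image_emb hemb f (Metric.ball (0:ℂ) 1)
  rw [himg] at h
  simp only [rotation_apply] at h
  exact h.symm

lemma stepB (ζ : ℂ) (hζ : ‖ζ‖ < 1) (H : ℂ → ℂ) (hH_cont : Continuous H)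
    (hH_rad : ∀ ξ ξ' : ℂ, ‖ξ‖ = ‖ξ'‖ → H ξ = H ξ')
    (hH_supp : HasCompactSupport H) :
    (∫ ξ in Metric.ball (0:ℂ) 1, ((1 - ζ * (starRingEnd ℂ) ξ)^2)⁻¹ * H ξ) =
      ∫ ξ in Metric.ball (0:ℂ) 1, H ξ := by
  obtain ⟨C, hC⟩ := hH_cont.bounded_above_of_compact_support hH_supp
  set B := Metric.ball (0:ℂ) 1 with hB
  set φ : ℝ → ℂ → ℂ := fun θ ξ =>
    ((1 - ζ * (starRingEnd ℂ) ξ * Complex.exp (-(θ:ℂ) * I))^2)⁻¹ * H ξ with hφ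
  have hζ0 : 0 < 1 - ‖ζ‖ := by linarith
  -- pointwise facts
  have habs : ∀ (θ : ℝ) (ξ : ℂ), ξ ∈ B →
      ‖ζ * (starRingEnd ℂ) ξ * Complex.exp (-(θ:ℂ) * I)‖ ≤ ‖ζ‖ := by
    intro θ ξ hξ
    rw [norm_mul, norm_mul, Complex.norm_conj]
    have h1 : ‖Complex.exp (-(θ:ℂ) * I)‖ = 1 := by
      rw [Complex.norm_exp]; simp
    rw [h1, mul_one]
    have h2 : ‖ξ‖ < 1 := by
      rwa [hB, Metric.mem_ball, dist_zero_right] at hξ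
    nlinarith [norm_nonneg ζ, norm_nonneg ξ]
  have hden : ∀ (θ : ℝ) (ξ : ℂ), ξ ∈ B →
      (1:ℂ) - ζ * (starRingEnd ℂ) ξ * Complex.exp (-(θ:ℂ) * I) ≠ 0 := by
    intro θ ξ hξ h
    have h2 := habs θ ξ hξ
    rw [sub_eq_zero] at h
    rw [← h] at h2
    simp at h2
    linarith
  -- integrability on the product
  set K := Set.Ioc (0:ℝ) (2*π) ×ˢ B with hK
  have hKmeas : MeasurableSet K := measurableSet_Ioc.prod measurableSet_ball
  have hcont : ContinuousOn (fun p : ℝ × ℂ => φ p.1 p.2) K := by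
    apply ContinuousOn.mul
    · apply ContinuousOn.inv₀
      · apply Continuous.continuousOn
        apply Continuous.pow
        apply continuous_const.sub
        apply Continuous.mul
        · exact continuous_const.mul (Complex.continuous_conj.comp continuous_snd)
        · exact Complex.continuous_exp.comp (by continuity)
      · intro p hp
        exact pow_ne_zero 2 (hden p.1 p.2 hp.2)
    · exact (hH_cont.comp continuous_snd).continuousOn
  have hInt : Integrable (fun p : ℝ × ℂ => φ p.1 p.2)
      ((volume.restrict (Set.Ioc (0:ℝ) (2*π))).prod (volume.restrict B)) := by
    rw [Measure.prod_restrict]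
    refine Integrable.mono' (g := fun _ => ((1 - ‖ζ‖)^2)⁻¹ * C) ?_
      (hcont.aestronglyMeasurable hKmeas) ?_
    · rw [integrable_const_iff]
      right
      constructor
      rw [Measure.restrict_apply_univ, Measure.prod_prod]
      exact ENNReal.mul_lt_top (by simp [Real.volume_Ioc, ENNReal.mul_lt_top]) (by rw [hB]; exact measure_ball_lt_top)
    · rw [ae_restrict_iff' hKmeas]
      filter_upwards with p hp
      obtain ⟨hp1, hp2⟩ := hp
      rw [norm_mul, norm_inv, norm_pow]
      have hlow : 1 - ‖ζ‖ ≤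
          ‖1 - ζ * (starRingEnd ℂ) p.2 * Complex.exp (-(p.1:ℂ) * I)‖ := by
        have hns := norm_sub_norm_le (1:ℂ)
          (ζ * (starRingEnd ℂ) p.2 * Complex.exp (-(p.1:ℂ) * I))
        have h2 := habs p.1 p.2 hp2
        simp only [norm_one] at hns
        linarith
      have hpow : ((1 - ‖ζ‖)^2)⁻¹ ≥
          (‖1 - ζ * (starRingEnd ℂ) p.2 * Complex.exp (-(p.1:ℂ) * I)‖ ^ 2)⁻¹ := by
        apply inv_anti₀ (by positivity)
        apply pow_le_pow_left₀ (le_of_lt hζ0) hlow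
      have hHb := hC p.2
      have h0 : (0:ℝ) ≤ (‖1 - ζ * (starRingEnd ℂ) p.2 *
          Complex.exp (-(p.1:ℂ) * I)‖ ^ 2)⁻¹ := by positivity
      calc (‖1 - ζ * (starRingEnd ℂ) p.2 *
            Complex.exp (-(p.1:ℂ) * I)‖ ^ 2)⁻¹ * ‖H p.2‖
          ≤ ((1 - ‖ζ‖)^2)⁻¹ * ‖H p.2‖ := by
            apply mul_le_mul_of_nonneg_right hpow (norm_nonneg _)
        _ ≤ ((1 - ‖ζ‖)^2)⁻¹ * C := by
            apply mul_le_mul_of_nonneg_left (hC p.2) (by positivity)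
  -- rotation invariance: each θ-slice integral equals the original
  have hrot : ∀ θ : ℝ, (∫ ξ in B, φ θ ξ) =
      ∫ ξ in B, ((1 - ζ * (starRingEnd ℂ) ξ)^2)⁻¹ * H ξ := by
    intro θ
    have := rot_inv (fun ξ => ((1 - ζ * (starRingEnd ℂ) ξ)^2)⁻¹ * H ξ) (Circle.exp θ)
    rw [← this]
    apply setIntegral_congr_fun measurableSet_ball
    intro ξ _
    have hc : ((Circle.exp θ : Circle) : ℂ) = Complex.exp (θ * I) := Circle.coe_exp θ
    have hconj : (starRingEnd ℂ) (((Circle.exp θ : Circle) : ℂ) * ξ) =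
        Complex.exp (-(θ:ℂ) * I) * (starRingEnd ℂ) ξ := by
      rw [map_mul, hc, ← Complex.exp_conj]
      congr 1
      simp [Complex.conj_I]
    have hH : H (((Circle.exp θ : Circle) : ℂ) * ξ) = H ξ := by
      apply hH_rad
      rw [norm_mul, hc]
      have : ‖Complex.exp ((θ:ℂ) * I)‖ = 1 := by
        rw [Complex.norm_exp]; simp
      rw [this, one_mul]
    simp only [hφ]
    rw [hconj, hH]
    ring_nf
  -- Fubini
  have hswap := integral_integral_swap (f := φ) (μ := volume.restrict (Set.Ioc (0:ℝ) (2*π)))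
    (ν := volume.restrict B) hInt
  -- LHS of swap
  have hL : (∫ θ in Set.Ioc (0:ℝ) (2*π), ∫ ξ in B, φ θ ξ) =
      (2*π : ℝ) • ∫ ξ in B, ((1 - ζ * (starRingEnd ℂ) ξ)^2)⁻¹ * H ξ := by
    rw [setIntegral_congr_fun measurableSet_Ioc (fun θ _ => hrot θ)]
    rw [setIntegral_const]
    congr 1
    simp [Real.volume_Ioc]
    positivity
  -- RHS of swap
  have hR : (∫ ξ in B, ∫ θ in Set.Ioc (0:ℝ) (2*π), φ θ ξ) =
      (2*π : ℂ) * ∫ ξ in B, H ξ := by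
    rw [← integral_const_mul]
    apply setIntegral_congr_fun measurableSet_ball
    intro ξ hξ
    have haξ : ‖ζ * (starRingEnd ℂ) ξ‖ < 1 := by
      rw [norm_mul, Complex.norm_conj]
      have h2 : ‖ξ‖ < 1 := by
        rwa [Metric.mem_ball, dist_zero_right] at hξ
      nlinarith [norm_nonneg ζ, norm_nonneg ξ]
    have := circle_avg (ζ * (starRingEnd ℂ) ξ) haξ
    simp only [hφ]
    rw [integral_mul_const, this]
  rw [hL, hR] at hswap
  have h2πne : (2*π : ℂ) ≠ 0 := by
    simp [Real.pi_ne_zero]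
  have : (2*π : ℂ) * (∫ ξ in B, ((1 - ζ * (starRingEnd ℂ) ξ)^2)⁻¹ * H ξ) =
      (2*π : ℂ) * ∫ ξ in B, H ξ := by
    rw [← hswap]
    rw [Complex.real_smul]
    push_cast
    ring
  exact mul_left_cancel₀ h2πne this

/-- On the lens `D = D₁(0) ∩ D₁(1)`, if `F : D → 𝔻` is a holomorphic bijection with
derivative `F′` and `H` is a continuous radial function compactly supported in `𝔻`,
then the projection of `χ = (H∘F)·F′` against the transformed Bergman kernel
`F′(z)K_𝔻(F(z),F(w))·conj(F′(w))` equals `(∫_𝔻 H dA)·F′(z)`. -/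
theorem stmt_15 (D : Set ℂ) (hD : D = Metric.ball (0 : ℂ) 1 ∩ Metric.ball (1 : ℂ) 1)
    (F F' : ℂ → ℂ) (hF_deriv : ∀ z ∈ D, HasDerivAt F (F' z) z)
    (hF_bij : Set.BijOn F D (Metric.ball (0 : ℂ) 1))
    (H : ℂ → ℂ) (hH_cont : Continuous H)
    (hH_rad : ∀ ξ ξ' : ℂ, ‖ξ‖ = ‖ξ'‖ → H ξ = H ξ')
    (hH_supp : HasCompactSupport H ∧ tsupport H ⊆ Metric.ball (0 : ℂ) 1) :
    ∀ z ∈ D,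
      ∫ w in D, F' z * ((1 - F z * (starRingEnd ℂ) (F w)) ^ 2)⁻¹ *
          (starRingEnd ℂ) (F' w) * H (F w) * F' w =
        (∫ ξ in Metric.ball (0 : ℂ) 1, H ξ) * F' z := by
  intro z hz
  have hDmeas : MeasurableSet D := by
    rw [hD]
    exact (Metric.isOpen_ball.inter Metric.isOpen_ball).measurableSet
  have himg : F '' D = Metric.ball (0:ℂ) 1 := hF_bij.image_eq
  have hFz : ‖F z‖ < 1 := by
    have := hF_bij.mapsTo hz
    rwa [Metric.mem_ball, dist_zero_right] at this
  set g : ℂ → ℂ := fun ξ => F' z * (((1 - F z * (starRingEnd ℂ) ξ)^2)⁻¹ * H ξ) with hg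
  have hfd : ∀ w ∈ D, HasFDerivWithinAt F
      ((ContinuousLinearMap.smulRight (1 : ℂ →L[ℂ] ℂ) (F' w)).restrictScalars ℝ) D w :=
    fun w hw => (((hF_deriv w hw).hasFDerivAt).restrictScalars ℝ).hasFDerivWithinAt
  have hcov := integral_image_eq_integral_abs_det_fderiv_smul volume hDmeas hfd hF_bij.injOn g
  rw [himg] at hcov
  have heq : ∀ w : ℂ, |ContinuousLinearMap.det
      ((ContinuousLinearMap.smulRight (1 : ℂ →L[ℂ] ℂ) (F' w)).restrictScalars ℝ)| • g (F w) =
      F' z * ((1 - F z * (starRingEnd ℂ) (F w)) ^ 2)⁻¹ *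
        (starRingEnd ℂ) (F' w) * H (F w) * F' w := by
    intro w
    rw [det_mul_aux, _root_.abs_of_nonneg (Complex.normSq_nonneg _), Complex.real_smul,
      ← Complex.mul_conj]
    simp only [hg]
    ring
  calc ∫ w in D, F' z * ((1 - F z * (starRingEnd ℂ) (F w)) ^ 2)⁻¹ *
          (starRingEnd ℂ) (F' w) * H (F w) * F' w
      = ∫ w in D, |ContinuousLinearMap.det
          ((ContinuousLinearMap.smulRight (1 : ℂ →L[ℂ] ℂ) (F' w)).restrictScalars ℝ)| •
            g (F w) := by
        refine setIntegral_congr_fun hDmeas fun w _ => (heq w).symm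
    _ = ∫ ξ in Metric.ball (0:ℂ) 1, g ξ := hcov.symm
    _ = F' z * ∫ ξ in Metric.ball (0:ℂ) 1, ((1 - F z * (starRingEnd ℂ) ξ)^2)⁻¹ * H ξ := by
        simp only [hg]
        rw [integral_const_mul]
    _ = F' z * ∫ ξ in Metric.ball (0:ℂ) 1, H ξ := by
        rw [stepB (F z) hFz H hH_cont hH_rad hH_supp.1]
    _ = (∫ ξ in Metric.ball (0:ℂ) 1, H ξ) * F' z := mul_comm _ _
end
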